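/- Let k be an algebraically closed field of characteristic different from 2, and let S_2 ⊂ P^2 × P^1 be the surface defined by F_2 = u^2 z^3 - x y z^2 w + (x^2 + y^2 - u^2) z w^2 - x y w^3. Then the singular points of S_2 are exactly the four points (1:0:0, 1:0), (0:1:0, 1:0), (1:1:0, 1:1), (1:-1:0, 1:-1). -/

import Mathlib

open MvPolynomial

/-- The bihomogeneous polynomial `F₂ = u²z³ - xyz²w + (x²+y²-u²)zw² - xyw³`
in variables `x = X 0`, `y = X 1`, `u = X 2`, `z = X 3`, `w = X 4`. -/
noncomputable def F2poly (k : Type) [CommRing k] : MvPolynomial (Fin 5) k :=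
  X 2 ^ 2 * X 3 ^ 3 - X 0 * X 1 * X 3 ^ 2 * X 4
    + (X 0 ^ 2 + X 1 ^ 2 - X 2 ^ 2) * X 3 * X 4 ^ 2 - X 0 * X 1 * X 4 ^ 3

lemma evalF2 {k : Type} [CommRing k] (x y u z w : k) :
    eval ![x,y,u,z,w] (F2poly k)
      = u^2*z^3 - x*y*z^2*w + (x^2+y^2-u^2)*z*w^2 - x*y*w^3 := by
  simp [F2poly]

lemma evalD0 {k : Type} [CommRing k] (x y u z w : k) :
    eval ![x,y,u,z,w] (pderiv 0 (F2poly k)) = -(y*z^2*w) + 2*x*z*w^2 - y*w^3 := by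
  simp [F2poly, pderiv_mul, pderiv_pow, pderiv_X]; ring

lemma evalD1 {k : Type} [CommRing k] (x y u z w : k) :
    eval ![x,y,u,z,w] (pderiv 1 (F2poly k)) = -(x*z^2*w) + 2*y*z*w^2 - x*w^3 := by
  simp [F2poly, pderiv_mul, pderiv_pow, pderiv_X]; ring

lemma evalD2 {k : Type} [CommRing k] (x y u z w : k) :
    eval ![x,y,u,z,w] (pderiv 2 (F2poly k)) = 2*u*z^3 - 2*u*z*w^2 := by
  simp [F2poly, pderiv_mul, pderiv_pow, pderiv_X]; ring

lemma evalD3 {k : Type} [CommRing k] (x y u z w : k) :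
    eval ![x,y,u,z,w] (pderiv 3 (F2poly k))
      = 3*u^2*z^2 - 2*x*y*z*w + (x^2+y^2-u^2)*w^2 := by
  simp [F2poly, pderiv_mul, pderiv_pow, pderiv_X]; ring

lemma evalD4 {k : Type} [CommRing k] (x y u z w : k) :
    eval ![x,y,u,z,w] (pderiv 4 (F2poly k))
      = -(x*y*z^2) + 2*(x^2+y^2-u^2)*z*w - 3*x*y*w^2 := by
  simp [F2poly, pderiv_mul, pderiv_pow, pderiv_X]; ring

lemma rep_spec {k : Type} [Field k] {n : ℕ} (v : Fin n → k) (hv : v ≠ 0) :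
    ∃ a : k, a ≠ 0 ∧ ∀ i, (Projectivization.mk k v hv).rep i = a * v i := by
  obtain ⟨a, ha⟩ := (Projectivization.mk_eq_mk_iff k _ _
    (Projectivization.rep_nonzero _) hv).mp (Projectivization.mk_rep _)
  exact ⟨(a : k), a.ne_zero, fun i => by rw [← ha]; simp [Units.smul_def]⟩

lemma eq_mk {k : Type} [Field k] {n : ℕ} (P : Projectivization k (Fin n → k))
    (v : Fin n → k) (hv : v ≠ 0) (a : k) (ha : a ≠ 0)
    (h : ∀ i, P.rep i = a * v i) : P = Projectivization.mk k v hv := by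
  rw [← Projectivization.mk_rep P]
  exact (Projectivization.mk_eq_mk_iff _ _ _ _ _).mpr
    ⟨Units.mk0 a ha, funext fun i => by simp [Units.smul_def, (h i).symm]⟩

lemma key {k : Type} [Field k] (h2 : (2:k) ≠ 0) (x y u z w : k)
    (hP : ¬(x = 0 ∧ y = 0 ∧ u = 0)) (hQ : ¬(z = 0 ∧ w = 0))
    (e0 : -(y*z^2*w) + 2*x*z*w^2 - y*w^3 = 0)
    (e1 : -(x*z^2*w) + 2*y*z*w^2 - x*w^3 = 0)
    (e2 : 2*u*z^3 - 2*u*z*w^2 = 0)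
    (e3 : 3*u^2*z^2 - 2*x*y*z*w + (x^2+y^2-u^2)*w^2 = 0)
    (e4 : -(x*y*z^2) + 2*(x^2+y^2-u^2)*z*w - 3*x*y*w^2 = 0) :
    (y = 0 ∧ u = 0 ∧ w = 0 ∧ x ≠ 0 ∧ z ≠ 0) ∨
    (x = 0 ∧ u = 0 ∧ w = 0 ∧ y ≠ 0 ∧ z ≠ 0) ∨
    (y = x ∧ u = 0 ∧ w = z ∧ x ≠ 0 ∧ z ≠ 0) ∨
    (y = -x ∧ u = 0 ∧ w = -z ∧ x ≠ 0 ∧ z ≠ 0) := by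
  have h4 : (4:k) ≠ 0 := by
    have h : (4:k) = 2*2 := by norm_num
    rw [h]; exact mul_ne_zero h2 h2
  by_cases hw : w = 0
  · subst hw
    have hz : z ≠ 0 := fun h => hQ ⟨h, rfl⟩
    have hu : u = 0 := by
      have h : u * (2 * z^3) = 0 := by linear_combination e2
      exact (mul_eq_zero.mp h).resolve_right (mul_ne_zero h2 (pow_ne_zero 3 hz))
    have hxy : x * y = 0 := by
      have h : (x*y) * z^2 = 0 := by linear_combination -e4
      exact (mul_eq_zero.mp h).resolve_right (pow_ne_zero 2 hz)
    rcases mul_eq_zero.mp hxy with hx | hy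
    · exact Or.inr (Or.inl ⟨hx, hu, rfl, fun hy => hP ⟨hx, hy, hu⟩, hz⟩)
    · exact Or.inl ⟨hy, hu, rfl, fun hx => hP ⟨hx, hy, hu⟩, hz⟩
  · have hs : (x+y) * (w * (z-w)^2) = 0 := by linear_combination -e0 - e1
    have hd : (x-y) * (w * (z+w)^2) = 0 := by linear_combination e0 - e1
    have hw3 : w^3 ≠ 0 := pow_ne_zero 3 hw
    by_cases hzw : z = w
    · subst hzw
      have hz : z ≠ 0 := hw
      have hxy : y = x := by
        have h : (x - y) * (4 * z^3) = 0 := by linear_combination hd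
        exact (sub_eq_zero.mp ((mul_eq_zero.mp h).resolve_right
          (mul_ne_zero h4 hw3))).symm
      have hu : u = 0 := by
        have h : u^2 * (2*z^2) = 0 := by linear_combination e3 + (x-y)*z^2*hxy
        exact pow_eq_zero_iff (by norm_num) |>.mp
          ((mul_eq_zero.mp h).resolve_right (mul_ne_zero h2 (pow_ne_zero 2 hz)))
      exact Or.inr (Or.inr (Or.inl ⟨hxy, hu, rfl,
        fun hx => hP ⟨hx, by rw [hxy, hx], hu⟩, hz⟩))
    · by_cases hzw' : z = -w
      · subst hzw'
        have hz : -w ≠ 0 := neg_ne_zero.mpr hw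
        have hxy : y = -x := by
          have h : (x + y) * (4 * w^3) = 0 := by linear_combination hs
          exact eq_neg_of_add_eq_zero_right
            ((mul_eq_zero.mp h).resolve_right (mul_ne_zero h4 hw3))
        have hu : u = 0 := by
          have h : u^2 * (2*w^2) = 0 := by linear_combination e3 - (x+y)*w^2*hxy
          exact pow_eq_zero_iff (by norm_num) |>.mp
            ((mul_eq_zero.mp h).resolve_right (mul_ne_zero h2 (pow_ne_zero 2 hw)))
        exact Or.inr (Or.inr (Or.inr ⟨hxy, hu, (neg_neg w).symm,
          fun hx => hP ⟨hx, by rw [hxy, hx, neg_zero], hu⟩, hz⟩))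
      · exfalso
        have hzw2 : (z - w)^2 ≠ 0 := pow_ne_zero 2 (sub_ne_zero.mpr hzw)
        have hzw2' : z + w ≠ 0 := fun h => hzw' (eq_neg_of_add_eq_zero_left h)
        have hxs : x + y = 0 :=
          (mul_eq_zero.mp hs).resolve_right (mul_ne_zero hw hzw2)
        have hxd : x - y = 0 :=
          (mul_eq_zero.mp hd).resolve_right
            (mul_ne_zero hw (pow_ne_zero 2 hzw2'))
        have hx : x = 0 := by
          have h : x * 2 = 0 := by linear_combination hxs + hxd
          exact (mul_eq_zero.mp h).resolve_right h2
        have hy : y = 0 := by linear_combination hxs - hx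
        have hu : u ≠ 0 := fun h => hP ⟨hx, hy, h⟩
        have hz : z = 0 := by
          have h : z * (u * (2 * ((z-w)*(z+w)))) = 0 := by linear_combination e2
          exact (mul_eq_zero.mp h).resolve_right
            (mul_ne_zero hu (mul_ne_zero h2
              (mul_ne_zero (sub_ne_zero.mpr hzw) hzw2')))
        subst hx; subst hy; subst hz
        have h : u^2 * w^2 = 0 := by linear_combination -e3
        rcases mul_eq_zero.mp h with h | h
        · exact hu (pow_eq_zero_iff (by norm_num) |>.mp h)
        · exact hw (pow_eq_zero_iff (by norm_num) |>.mp h)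

lemma Dall {k : Type} [CommRing k] (x y u z w : k)
    (h0 : -(y*z^2*w) + 2*x*z*w^2 - y*w^3 = 0)
    (h1 : -(x*z^2*w) + 2*y*z*w^2 - x*w^3 = 0)
    (h2 : 2*u*z^3 - 2*u*z*w^2 = 0)
    (h3 : 3*u^2*z^2 - 2*x*y*z*w + (x^2+y^2-u^2)*w^2 = 0)
    (h4 : -(x*y*z^2) + 2*(x^2+y^2-u^2)*z*w - 3*x*y*w^2 = 0) :
    ∀ i : Fin 5, eval ![x,y,u,z,w] (pderiv i (F2poly k)) = 0 := by
  have g0 : eval ![x,y,u,z,w] (pderiv (0:Fin 5) (F2poly k)) = 0 := by rw [evalD0]; exact h0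
  have g1 : eval ![x,y,u,z,w] (pderiv (1:Fin 5) (F2poly k)) = 0 := by rw [evalD1]; exact h1
  have g2 : eval ![x,y,u,z,w] (pderiv (2:Fin 5) (F2poly k)) = 0 := by rw [evalD2]; exact h2
  have g3 : eval ![x,y,u,z,w] (pderiv (3:Fin 5) (F2poly k)) = 0 := by rw [evalD3]; exact h3
  have g4 : eval ![x,y,u,z,w] (pderiv (4:Fin 5) (F2poly k)) = 0 := by rw [evalD4]; exact h4
  intro i
  fin_cases i <;> [exact g0; exact g1; exact g2; exact g3; exact g4]

theorem stmt_12 (k : Type) [Field k] [IsAlgClosed k] (hchar : ringChar k ≠ 2) :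
    {PQ : Projectivization k (Fin 3 → k) × Projectivization k (Fin 2 → k) |
        eval ![PQ.1.rep 0, PQ.1.rep 1, PQ.1.rep 2, PQ.2.rep 0, PQ.2.rep 1]
            (F2poly k) = 0 ∧
        ∀ i : Fin 5,
          eval ![PQ.1.rep 0, PQ.1.rep 1, PQ.1.rep 2, PQ.2.rep 0, PQ.2.rep 1]
            (MvPolynomial.pderiv i (F2poly k)) = 0} =
      {(Projectivization.mk k ![1, 0, 0] (fun h => one_ne_zero (congrFun h 0)),
        Projectivization.mk k ![1, 0] (fun h => one_ne_zero (congrFun h 0))),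
       (Projectivization.mk k ![0, 1, 0] (fun h => one_ne_zero (congrFun h 1)),
        Projectivization.mk k ![1, 0] (fun h => one_ne_zero (congrFun h 0))),
       (Projectivization.mk k ![1, 1, 0] (fun h => one_ne_zero (congrFun h 0)),
        Projectivization.mk k ![1, 1] (fun h => one_ne_zero (congrFun h 0))),
       (Projectivization.mk k ![1, -1, 0] (fun h => one_ne_zero (congrFun h 0)),
        Projectivization.mk k ![1, -1] (fun h => one_ne_zero (congrFun h 0)))} := by
  have h2 : (2:k) ≠ 0 := Ring.two_ne_zero hchar
  ext ⟨P, Q⟩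
  simp only [Set.mem_setOf_eq, Set.mem_insert_iff, Set.mem_singleton_iff,
    Prod.mk.injEq]
  constructor
  · rintro ⟨-, hD⟩
    have hPn : ¬(P.rep 0 = 0 ∧ P.rep 1 = 0 ∧ P.rep 2 = 0) := by
      rintro ⟨h0, h1, h2'⟩
      exact P.rep_nonzero (funext fun i => by fin_cases i <;> assumption)
    have hQn : ¬(Q.rep 0 = 0 ∧ Q.rep 1 = 0) := by
      rintro ⟨h0, h1⟩
      exact Q.rep_nonzero (funext fun i => by fin_cases i <;> assumption)
    have e0 := hD 0; rw [evalD0] at e0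
    have e1 := hD 1; rw [evalD1] at e1
    have e2 := hD 2; rw [evalD2] at e2
    have e3 := hD 3; rw [evalD3] at e3
    have e4 := hD 4; rw [evalD4] at e4
    rcases key h2 _ _ _ _ _ hPn hQn e0 e1 e2 e3 e4 with
      ⟨hy, hu, hw, hx, hz⟩ | ⟨hx, hu, hw, hy, hz⟩ |
      ⟨hy, hu, hw, hx, hz⟩ | ⟨hy, hu, hw, hx, hz⟩
    · exact Or.inl ⟨eq_mk P _ _ (P.rep 0) hx (fun i => by fin_cases i <;> simp [hy, hu]),
        eq_mk Q _ _ (Q.rep 0) hz (fun i => by fin_cases i <;> simp [hw])⟩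
    · exact Or.inr (Or.inl ⟨eq_mk P _ _ (P.rep 1) hy
          (fun i => by fin_cases i <;> simp [hx, hu]),
        eq_mk Q _ _ (Q.rep 0) hz (fun i => by fin_cases i <;> simp [hw])⟩)
    · exact Or.inr (Or.inr (Or.inl ⟨eq_mk P _ _ (P.rep 0) hx
          (fun i => by fin_cases i <;> simp [hy, hu]),
        eq_mk Q _ _ (Q.rep 0) hz (fun i => by fin_cases i <;> simp [hw])⟩))
    · exact Or.inr (Or.inr (Or.inr ⟨eq_mk P _ _ (P.rep 0) hx
          (fun i => by fin_cases i <;> simp [hy, hu]),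
        eq_mk Q _ _ (Q.rep 0) hz (fun i => by fin_cases i <;> simp [hw])⟩))
  · have step : ∀ (v : Fin 3 → k) (hv : v ≠ 0) (q : Fin 2 → k) (hq : q ≠ 0),
        eval ![v 0, v 1, v 2, q 0, q 1] (F2poly k) = 0 →
        (∀ i : Fin 5, eval ![v 0, v 1, v 2, q 0, q 1]
            (MvPolynomial.pderiv i (F2poly k)) = 0) →
        (eval ![(Projectivization.mk k v hv).rep 0, (Projectivization.mk k v hv).rep 1,
            (Projectivization.mk k v hv).rep 2, (Projectivization.mk k q hq).rep 0,
            (Projectivization.mk k q hq).rep 1] (F2poly k) = 0 ∧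
          ∀ i : Fin 5, eval ![(Projectivization.mk k v hv).rep 0,
            (Projectivization.mk k v hv).rep 1, (Projectivization.mk k v hv).rep 2,
            (Projectivization.mk k q hq).rep 0, (Projectivization.mk k q hq).rep 1]
            (MvPolynomial.pderiv i (F2poly k)) = 0) := by
      intro v hv q hq hF hDr
      obtain ⟨a, ha, hra⟩ := rep_spec v hv
      obtain ⟨b, hb, hrb⟩ := rep_spec q hq
      have hF' : eval ![v 0, v 1, v 2, q 0, q 1] (F2poly k)
          = v 2^2*(q 0)^3 - v 0*v 1*(q 0)^2*q 1 + ((v 0)^2+(v 1)^2-(v 2)^2)*q 0*(q 1)^2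
            - v 0*v 1*(q 1)^3 := evalF2 _ _ _ _ _
      constructor
      · rw [evalF2, hra 0, hra 1, hra 2, hrb 0, hrb 1]
        rw [hF'] at hF
        linear_combination a^2*b^3*hF
      · have g0 : eval ![(Projectivization.mk k v hv).rep 0, (Projectivization.mk k v hv).rep 1,
            (Projectivization.mk k v hv).rep 2, (Projectivization.mk k q hq).rep 0,
            (Projectivization.mk k q hq).rep 1] (MvPolynomial.pderiv 0 (F2poly k)) = 0 := by
          have h := hDr 0; rw [evalD0] at h ⊢
          simp only [hra 0, hra 1, hra 2, hrb 0, hrb 1]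
          linear_combination a*b^3*h
        have g1 : eval ![(Projectivization.mk k v hv).rep 0, (Projectivization.mk k v hv).rep 1,
            (Projectivization.mk k v hv).rep 2, (Projectivization.mk k q hq).rep 0,
            (Projectivization.mk k q hq).rep 1] (MvPolynomial.pderiv 1 (F2poly k)) = 0 := by
          have h := hDr 1; rw [evalD1] at h ⊢
          simp only [hra 0, hra 1, hra 2, hrb 0, hrb 1]
          linear_combination a*b^3*h
        have g2 : eval ![(Projectivization.mk k v hv).rep 0, (Projectivization.mk k v hv).rep 1,
            (Projectivization.mk k v hv).rep 2, (Projectivization.mk k q hq).rep 0,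
            (Projectivization.mk k q hq).rep 1] (MvPolynomial.pderiv 2 (F2poly k)) = 0 := by
          have h := hDr 2; rw [evalD2] at h ⊢
          simp only [hra 0, hra 1, hra 2, hrb 0, hrb 1]
          linear_combination a*b^3*h
        have g3 : eval ![(Projectivization.mk k v hv).rep 0, (Projectivization.mk k v hv).rep 1,
            (Projectivization.mk k v hv).rep 2, (Projectivization.mk k q hq).rep 0,
            (Projectivization.mk k q hq).rep 1] (MvPolynomial.pderiv 3 (F2poly k)) = 0 := by
          have h := hDr 3; rw [evalD3] at h ⊢
          simp only [hra 0, hra 1, hra 2, hrb 0, hrb 1]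
          linear_combination a^2*b^2*h
        have g4 : eval ![(Projectivization.mk k v hv).rep 0, (Projectivization.mk k v hv).rep 1,
            (Projectivization.mk k v hv).rep 2, (Projectivization.mk k q hq).rep 0,
            (Projectivization.mk k q hq).rep 1] (MvPolynomial.pderiv 4 (F2poly k)) = 0 := by
          have h := hDr 4; rw [evalD4] at h ⊢
          simp only [hra 0, hra 1, hra 2, hrb 0, hrb 1]
          linear_combination a^2*b^2*h
        intro i
        fin_cases i <;> [exact g0; exact g1; exact g2; exact g3; exact g4]
    rintro (⟨h1, h2'⟩ | ⟨h1, h2'⟩ | ⟨h1, h2'⟩ | ⟨h1, h2'⟩) <;> subst h1 <;> subst h2' <;>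
      refine step _ _ _ _ ?_ (Dall _ _ _ _ _ ?_ ?_ ?_ ?_ ?_) <;>
      norm_num [evalF2, Matrix.cons_val_two, Matrix.vecHead, Matrix.vecTail]
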